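/- Under the collaborative recommendation model, if |R_n| → ∞ almost surely as n → ∞, then E[ |L_n^c| / |R_n| ] → 0 as n → ∞. -/

import Mathlib

open MeasureTheory ProbabilityTheory Finset Filter
open scoped BigOperators Topology

noncomputable section

namespace Collab

/-- Discrete measurable structure on finsets (used for the random sets of rated items). -/
instance instMeasFinset (α : Type*) : MeasurableSpace (Finset α) := ⊤

/-- Vectors of ratings. -/
abbrev Vec (d : ℕ) := Fin d → ℝ

/-- The Euclidean norm on `Fin d → ℝ`. -/
def nrm {d : ℕ} (x : Vec d) : ℝ := Real.sqrt (∑ j, x j ^ 2)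

/-- The cosine-type similarity `S̄`: the sum is restricted to the set
`J = {j : x j ≠ 0 ∧ x' j ≠ 0}`; the convention `S̄ = 0` when `J = ∅` is automatic
from `0 / 0 = 0`. -/
def simBar {d : ℕ} (x x' : Vec d) : ℝ :=
  (∑ j ∈ Finset.univ.filter (fun j => x j ≠ 0 ∧ x' j ≠ 0), x j * x' j) /
    (Real.sqrt (∑ j ∈ Finset.univ.filter (fun j => x j ≠ 0 ∧ x' j ≠ 0), x j ^ 2) *
      Real.sqrt (∑ j ∈ Finset.univ.filter (fun j => x j ≠ 0 ∧ x' j ≠ 0), x' j ^ 2))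

/-- Masking a vector by a set of coordinates: coordinates outside `m` are set to `0`. -/
def mask {d : ℕ} (m : Finset (Fin d)) (x : Vec d) : Vec d := fun j => if j ∈ m then x j else 0

/-- `i` is among the `k` points most similar to the target among the points indexed by `Rs`,
for the similarity `sim`, ties being broken by smaller index: the number of indices
`j ∈ Rs` that are strictly more similar than `i`, or as similar with `j ≤ i`
(this count includes `i` itself), is at most `k`. -/
def amongMS (sim : ℕ → ℝ) (Rs : Finset ℕ) (k i : ℕ) : Prop :=
  i ∈ Rs ∧ (Rs.filter (fun j => sim i < sim j ∨ (sim j = sim i ∧ j ≤ i))).card ≤ k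

/-- Index type for the mutually independent ingredients of the model: the new user's pair
`(X, Y)`, the database pairs `(X_i, Y_i)`, the preference sequences `(M_i^n)_{n ≥ 1}`,
and the random set `M`. -/
inductive Idx where
  | newuser : Idx
  | user (i : ℕ) : Idx
  | mseq (i : ℕ) : Idx
  | m : Idx

/-- Codomains of the independent ingredients. -/
def idxType (d : ℕ) : Idx → Type
  | .newuser => Vec d × ℝ
  | .user _ => Vec d × ℝ
  | .mseq _ => ℕ → Finset (Fin d)
  | .m => Finset (Fin d)

instance (d : ℕ) : ∀ x, MeasurableSpace (idxType d x)
  | .newuser => inferInstanceAs (MeasurableSpace (Vec d × ℝ))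
  | .user _ => inferInstanceAs (MeasurableSpace (Vec d × ℝ))
  | .mseq _ => inferInstanceAs (MeasurableSpace (ℕ → Finset (Fin d)))
  | .m => inferInstanceAs (MeasurableSpace (Finset (Fin d)))

variable {d : ℕ} {Ω : Type} [MeasurableSpace Ω]

/-- The family of independent ingredients of the model. -/
def fam (X : Ω → Vec d) (Y : Ω → ℝ) (M : Ω → Finset (Fin d))
    (Xi : ℕ → Ω → Vec d) (Yi : ℕ → Ω → ℝ) (Mi : ℕ → ℕ → Ω → Finset (Fin d)) :
    ∀ x : Idx, Ω → idxType d x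
  | .newuser => fun ω => (X ω, Y ω)
  | .user i => fun ω => (Xi i ω, Yi i ω)
  | .mseq i => fun ω n => Mi i (n + 1) ω
  | .m => M

/-- The sequential stochastic model for collaborative recommendation.  `(X, Y)` is the new
user, `M` the set of items he has rated, `(Xi i, Yi i)` the database users,
`Mi i n = M_i^n` the set of items rated by user `i` at his `n`-th time period (`n ≥ 1`),
`Mgen n = M^n` the generic preference sequence and `R n = 𝓡_n` the set of users having
rated the item of interest at time `n`. -/
structure Model (d : ℕ) (s : ℝ) {Ω : Type} [MeasurableSpace Ω] (P : Measure Ω)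
    (X : Ω → Vec d) (Y : Ω → ℝ) (M : Ω → Finset (Fin d))
    (Xi : ℕ → Ω → Vec d) (Yi : ℕ → Ω → ℝ)
    (Mi : ℕ → ℕ → Ω → Finset (Fin d)) (Mgen : ℕ → Ω → Finset (Fin d))
    (R : ℕ → Ω → Finset ℕ) : Prop where
  isProb : IsProbabilityMeasure P
  dim_pos : 1 ≤ d
  s_gt_one : 1 < s
  meas_X : Measurable X
  meas_Y : Measurable Y
  meas_M : Measurable M
  meas_Xi : ∀ i, Measurable (Xi i)
  meas_Yi : ∀ i, Measurable (Yi i)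
  meas_Mi : ∀ i n, Measurable (Mi i n)
  meas_Mgen : ∀ n, Measurable (Mgen n)
  meas_R : ∀ n, Measurable (R n)
  X_range : ∀ ω j, X ω j ∈ Set.Icc (1 : ℝ) s
  Y_range : ∀ ω, Y ω ∈ Set.Icc (1 : ℝ) s
  M_ne : ∀ ω, (M ω).Nonempty
  Mi_ne : ∀ i n ω, 1 ≤ n → (Mi i n ω).Nonempty
  Mi_mono : ∀ i n ω, Mi i n ω ⊆ Mi i (n + 1) ω
  Mgen_ne : ∀ n ω, 1 ≤ n → (Mgen n ω).Nonempty
  Mgen_mono : ∀ n ω, Mgen n ω ⊆ Mgen (n + 1) ω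
  /-- the database pairs are distributed as the new user's pair -/
  ident_user : ∀ i, 1 ≤ i → P.map (fun ω => (Xi i ω, Yi i ω)) = P.map (fun ω => (X ω, Y ω))
  /-- every preference sequence is distributed as the generic sequence `(M^n)_{n ≥ 1}` -/
  ident_seq : ∀ i, 1 ≤ i →
    P.map (fun ω => (fun n => Mi i (n + 1) ω)) = P.map (fun ω => (fun n => Mgen (n + 1) ω))
  /-- `M^1` is distributed as `M` -/
  ident_M1 : P.map (Mgen 1) = P.map M
  /-- a.s. there is a (random) time `n₀` at which all `d` items are rated -/
  Mgen_full : ∀ᵐ ω ∂P, ∃ n, 1 ≤ n ∧ Mgen n ω = Finset.univ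
  R_sub : ∀ n ω, R n ω ⊆ Finset.Icc 1 n
  R_ne : ∀ n ω, 1 ≤ n → (R n ω).Nonempty
  R_mono : ∀ n ω, R n ω ⊆ R (n + 1) ω
  /-- mutual independence of the new user, the database pairs, the preference sequences
  and `M` -/
  indep : iIndepFun (fam X Y M Xi Yi Mi) P
  /-- `𝓡_n` is independent of `M` and of the preference sequences -/
  indep_R : ∀ n, IndepFun (R n) (fun ω => (M ω, fun i m => Mi i (m + 1) ω)) P

variable (P : Measure Ω)

/-- `X* = masked version of X`. -/
def XstarF (M : Ω → Finset (Fin d)) (X : Ω → Vec d) (ω : Ω) : Vec d := mask (M ω) (X ω)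

/-- `X_i^{(n)}`: the coordinates of `X_i` corated (at time `n`) by user `i` and the new user. -/
def XinF (M : Ω → Finset (Fin d)) (Xi : ℕ → Ω → Vec d) (Mi : ℕ → ℕ → Ω → Finset (Fin d))
    (n i : ℕ) (ω : Ω) : Vec d := mask (Mi i (n + 1 - i) ω ∩ M ω) (Xi i ω)

/-- `X_i^*`: the coordinates of `X_i` rated by the new user. -/
def XistarF (M : Ω → Finset (Fin d)) (Xi : ℕ → Ω → Vec d) (i : ℕ) (ω : Ω) : Vec d :=
  mask (M ω) (Xi i ω)

/-- The penalty `p_i^{(n)} = |M_i^{n+1-i} ∩ M| / |M|`. -/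
def pinF (M : Ω → Finset (Fin d)) (Mi : ℕ → ℕ → Ω → Finset (Fin d)) (n i : ℕ) (ω : Ω) : ℝ :=
  ((Mi i (n + 1 - i) ω ∩ M ω).card : ℝ) / ((M ω).card : ℝ)

/-- The penalized similarity `S(X*, X_i^{(n)}) = p_i^{(n)} S̄(X*, X_i^{(n)})`. -/
def simS (X : Ω → Vec d) (M : Ω → Finset (Fin d)) (Xi : ℕ → Ω → Vec d)
    (Mi : ℕ → ℕ → Ω → Finset (Fin d)) (n i : ℕ) (ω : Ω) : ℝ :=
  pinF M Mi n i ω * simBar (XstarF M X ω) (XinF M Xi Mi n i ω)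

open scoped Classical in
/-- The `k_n`-NN weights `W_{ni}(X*)`, with the conventions `W_{ni} = 0` when
`|𝓡_n| < k_n` or `X_i^{(n)} = 0`. -/
def W (X : Ω → Vec d) (M : Ω → Finset (Fin d)) (Xi : ℕ → Ω → Vec d)
    (Mi : ℕ → ℕ → Ω → Finset (Fin d)) (R : ℕ → Ω → Finset ℕ) (k : ℕ → ℕ)
    (n i : ℕ) (ω : Ω) : ℝ :=
  if k n ≤ (R n ω).card ∧ XinF M Xi Mi n i ω ≠ 0 ∧
      amongMS (fun j => simS X M Xi Mi n j ω) (R n ω) (k n) i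
    then 1 / (k n : ℝ) else 0

/-- The cosine-type `k_n`-NN regression estimate `η_n(X*)`
(the convention `0 ⬝ ∞ = 0` is automatic since `y / 0 = 0` and `0 * y = 0` in Lean). -/
def etan (X : Ω → Vec d) (M : Ω → Finset (Fin d)) (Xi : ℕ → Ω → Vec d) (Yi : ℕ → Ω → ℝ)
    (Mi : ℕ → ℕ → Ω → Finset (Fin d)) (R : ℕ → Ω → Finset ℕ) (k : ℕ → ℕ)
    (n : ℕ) (ω : Ω) : ℝ :=
  nrm (XstarF M X ω) *
    ∑ i ∈ R n ω, W X M Xi Mi R k n i ω * (Yi i ω / nrm (XinF M Xi Mi n i ω))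

/-- The regression function evaluated at the new user: `η(X*) = E[Y | X*]`. -/
def etaX (X : Ω → Vec d) (Y : Ω → ℝ) (M : Ω → Finset (Fin d)) : Ω → ℝ :=
  P[Y|MeasurableSpace.comap (XstarF M X) inferInstance]

/-- `φ(X*) = E[Y / ‖X*‖ | X*/‖X*‖]`. -/
def phiX (X : Ω → Vec d) (Y : Ω → ℝ) (M : Ω → Finset (Fin d)) : Ω → ℝ :=
  P[fun ω => Y ω / nrm (XstarF M X ω)|MeasurableSpace.comap
    (fun ω => (nrm (XstarF M X ω))⁻¹ • XstarF M X ω) inferInstance]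

/-- `α_{ni} = P(M^{n+1-i} ⊉ M | M)`: by independence of `M` and the generic sequence, this
is the function of `M` given by `m ↦ P(M^{n+1-i} ⊉ m)`. -/
def alphaF (M : Ω → Finset (Fin d)) (Mgen : ℕ → Ω → Finset (Fin d)) (n i : ℕ) (ω : Ω) : ℝ :=
  (P {ω' | ¬ M ω ⊆ Mgen (n + 1 - i) ω'}).toReal

open scoped Classical in
/-- `L_n = {i ∈ 𝓡_n : T_i ≤ n}` where `T_i = min{k ≥ i : M ⊆ M_i^{k+1-i}}`. -/
def Lset (M : Ω → Finset (Fin d)) (Mi : ℕ → ℕ → Ω → Finset (Fin d)) (R : ℕ → Ω → Finset ℕ)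
    (n : ℕ) (ω : Ω) : Finset ℕ :=
  (R n ω).filter (fun i => ∃ kk, i ≤ kk ∧ kk ≤ n ∧ M ω ⊆ Mi i (kk + 1 - i) ω)

open scoped Classical in
/-- The Euclidean nearest neighbor weights `W*_{ni}(X*)` over the set `L_n`, computed with
the similarity `S̄(X*, X_i^*)`. -/
def Wstar (X : Ω → Vec d) (M : Ω → Finset (Fin d)) (Xi : ℕ → Ω → Vec d)
    (Mi : ℕ → ℕ → Ω → Finset (Fin d)) (R : ℕ → Ω → Finset ℕ) (k : ℕ → ℕ)
    (n i : ℕ) (ω : Ω) : ℝ :=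
  if amongMS (fun j => simBar (XstarF M X ω) (XistarF M Xi j ω)) (Lset M Mi R n ω) (k n) i
    then 1 / (k n : ℝ) else 0

instance instDiscreteFinset (α : Type*) : DiscreteMeasurableSpace (Finset α) :=
  ⟨fun _ => MeasurableSpace.measurableSet_top⟩

section AuxLemmas

variable {d : ℕ} {Ω : Type} [MeasurableSpace Ω]

/-- `β m = E[P(M ⊄ M^m | M)]`. -/
def betaFn (P : Measure Ω) (M : Ω → Finset (Fin d)) (Mgen : ℕ → Ω → Finset (Fin d))
    (m : ℕ) : ℝ :=
  ∫ ω, (P {ω' | ¬ M ω ⊆ Mgen m ω'}).toReal ∂P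

variable {s : ℝ} {P : Measure Ω} {X : Ω → Vec d} {Y : Ω → ℝ} {M : Ω → Finset (Fin d)}
  {Xi : ℕ → Ω → Vec d} {Yi : ℕ → Ω → ℝ} {Mi : ℕ → ℕ → Ω → Finset (Fin d)}
  {Mgen : ℕ → Ω → Finset (Fin d)} {R : ℕ → Ω → Finset ℕ}

lemma meas_inner (hm : Model d s P X Y M Xi Yi Mi Mgen R) (m : ℕ) :
    Measurable (fun ω => (P {ω' | ¬ M ω ⊆ Mgen m ω'}).toReal) := by
  have h : (fun ω => (P {ω' | ¬ M ω ⊆ Mgen m ω'}).toReal)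
      = (fun a : Finset (Fin d) => (P {ω' | ¬ a ⊆ Mgen m ω'}).toReal) ∘ M := rfl
  rw [h]
  exact Measurable.of_discrete.comp hm.meas_M

lemma betaFn_nonneg (m : ℕ) : 0 ≤ betaFn P M Mgen m :=
  integral_nonneg fun _ => ENNReal.toReal_nonneg

lemma toReal_prob_le_one (hm : Model d s P X Y M Xi Yi Mi Mgen R) (A : Set Ω) :
    (P A).toReal ≤ 1 := by
  haveI := hm.isProb
  calc (P A).toReal ≤ (1 : ENNReal).toReal := ENNReal.toReal_mono (by simp) prob_le_one
  _ = 1 := by simp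

lemma betaFn_le_one (hm : Model d s P X Y M Xi Yi Mi Mgen R) (m : ℕ) :
    betaFn P M Mgen m ≤ 1 := by
  haveI := hm.isProb
  calc betaFn P M Mgen m ≤ ∫ (_ : Ω), (1 : ℝ) ∂P :=
        integral_mono_of_nonneg (ae_of_all _ fun _ => ENNReal.toReal_nonneg)
          (integrable_const 1) (ae_of_all _ fun ω => toReal_prob_le_one hm _)
  _ = 1 := by simp

lemma betaFn_tendsto (hm : Model d s P X Y M Xi Yi Mi Mgen R) :
    Tendsto (betaFn P M Mgen) atTop (𝓝 0) := by
  haveI := hm.isProb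
  have h0 : (0 : ℝ) = ∫ (_ : Ω), (0 : ℝ) ∂P := by simp
  rw [show (𝓝 (0:ℝ)) = 𝓝 (∫ (_ : Ω), (0:ℝ) ∂P) by rw [← h0]]
  apply tendsto_integral_of_dominated_convergence (bound := fun _ => 1)
  · exact fun m => (meas_inner hm m).aestronglyMeasurable
  · exact integrable_const 1
  · intro m
    filter_upwards with ω
    rw [Real.norm_eq_abs, abs_of_nonneg ENNReal.toReal_nonneg]
    exact toReal_prob_le_one hm _
  · filter_upwards with ω
    have hmeas : ∀ m, MeasurableSet {ω' | ¬ M ω ⊆ Mgen m ω'} := fun m =>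
      (hm.meas_Mgen m) (MeasurableSet.of_discrete (s := {b : Finset (Fin d) | ¬ M ω ⊆ b}))
    have hanti : Antitone (fun m => {ω' | ¬ M ω ⊆ Mgen m ω'}) := by
      intro a b hab ω' hω'
      have hmono : Monotone (fun k => Mgen k ω') :=
        monotone_nat_of_le_succ (fun k => hm.Mgen_mono k ω')
      exact fun hsub => hω' (hsub.trans (hmono hab))
    have hinter : P (⋂ m, {ω' | ¬ M ω ⊆ Mgen m ω'}) = 0 := by
      refine measure_mono_null ?_ (ae_iff.mp hm.Mgen_full)
      intro ω' hω'
      rintro ⟨n, _, hn⟩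
      exact (Set.mem_iInter.mp hω' n) (by rw [hn]; exact Finset.subset_univ _)
    have htend := tendsto_measure_iInter_atTop (μ := P)
      (fun m => (hmeas m).nullMeasurableSet) hanti ⟨0, measure_ne_top P _⟩
    rw [hinter] at htend
    have := (ENNReal.tendsto_toReal (a := 0) (by simp)).comp htend
    exact this

lemma stepC (hm : Model d s P X Y M Xi Yi Mi Mgen R) {i m : ℕ} (hi : 1 ≤ i) (hmm : 1 ≤ m) :
    (P {ω | ¬ M ω ⊆ Mi i m ω}).toReal = betaFn P M Mgen m := by
  haveI := hm.isProb
  have hseqi : Measurable (fun ω => fun n : ℕ => Mi i (n + 1) ω) :=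
    measurable_pi_lambda _ fun k => hm.meas_Mi i (k + 1)
  have hseqg : Measurable (fun ω => fun n : ℕ => Mgen (n + 1) ω) :=
    measurable_pi_lambda _ fun k => hm.meas_Mgen (k + 1)
  have hindep : IndepFun M (fun ω => fun n : ℕ => Mi i (n + 1) ω) P :=
    hm.indep.indepFun (i := Idx.m) (j := Idx.mseq i) (fun h => Idx.noConfusion h)
  have hmap : P.map (fun ω => (M ω, fun n : ℕ => Mi i (n + 1) ω))
      = (P.map M).prod (P.map (fun ω => fun n : ℕ => Mi i (n + 1) ω)) :=
    (indepFun_iff_map_prod_eq_prod_map_map hm.meas_M.aemeasurable hseqi.aemeasurable).mp hindep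
  have hS : MeasurableSet {p : Finset (Fin d) × (ℕ → Finset (Fin d)) | ¬ p.1 ⊆ p.2 (m - 1)} := by
    have h : {p : Finset (Fin d) × (ℕ → Finset (Fin d)) | ¬ p.1 ⊆ p.2 (m - 1)}
        = (fun p : Finset (Fin d) × (ℕ → Finset (Fin d)) => (p.1, p.2 (m - 1))) ⁻¹'
            {q : Finset (Fin d) × Finset (Fin d) | ¬ q.1 ⊆ q.2} := rfl
    rw [h]
    exact (measurable_fst.prodMk ((measurable_pi_apply (m - 1)).comp measurable_snd))
      MeasurableSet.of_discrete
  have h1 : {ω | ¬ M ω ⊆ Mi i m ω}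
      = (fun ω => (M ω, fun n : ℕ => Mi i (n + 1) ω)) ⁻¹'
          {p : Finset (Fin d) × (ℕ → Finset (Fin d)) | ¬ p.1 ⊆ p.2 (m - 1)} := by
    ext ω
    simp only [Set.mem_setOf_eq, Set.mem_preimage]
    rw [Nat.sub_add_cancel hmm]
  rw [h1, ← Measure.map_apply (hm.meas_M.prodMk hseqi) hS, hmap, hm.ident_seq i hi,
    Measure.prod_apply hS]
  have h2 : ∀ a : Finset (Fin d),
      (P.map (fun ω => fun n : ℕ => Mgen (n + 1) ω))
          (Prod.mk a ⁻¹' {p : Finset (Fin d) × (ℕ → Finset (Fin d)) | ¬ p.1 ⊆ p.2 (m - 1)})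
        = P {ω' | ¬ a ⊆ Mgen m ω'} := by
    intro a
    have hSa : MeasurableSet (Prod.mk a ⁻¹'
        {p : Finset (Fin d) × (ℕ → Finset (Fin d)) | ¬ p.1 ⊆ p.2 (m - 1)}) := by
      have h : (Prod.mk a ⁻¹'
            {p : Finset (Fin d) × (ℕ → Finset (Fin d)) | ¬ p.1 ⊆ p.2 (m - 1)})
          = (fun u : ℕ → Finset (Fin d) => u (m - 1)) ⁻¹' {b : Finset (Fin d) | ¬ a ⊆ b} := rfl
      rw [h]
      exact (measurable_pi_apply (m - 1)) MeasurableSet.of_discrete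
    rw [Measure.map_apply hseqg hSa]
    congr 1
    ext ω'
    simp only [Set.mem_preimage, Set.mem_setOf_eq]
    rw [Nat.sub_add_cancel hmm]
  simp_rw [h2]
  rw [lintegral_map (Measurable.of_discrete
    (f := fun a : Finset (Fin d) => P {ω' | ¬ a ⊆ Mgen m ω'})) hm.meas_M]
  rw [show betaFn P M Mgen m = ∫ ω, (P {ω' | ¬ M ω ⊆ Mgen m ω'}).toReal ∂P from rfl,
    integral_toReal]
  · exact ((Measurable.of_discrete
      (f := fun a : Finset (Fin d) => P {ω' | ¬ a ⊆ Mgen m ω'})).comp hm.meas_M).aemeasurable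
  · filter_upwards with ω
    exact measure_lt_top P _

lemma ptwise (β : ℕ → ℝ) (hβ0 : ∀ m, 0 ≤ β m) (hβ1 : ∀ m, β m ≤ 1)
    (hβ : Tendsto β atTop (𝓝 0)) (r : ℕ → Finset ℕ) (hr : ∀ n, r n ⊆ Finset.Icc 1 n)
    (hcard : Tendsto (fun n => (r n).card) atTop atTop) :
    Tendsto (fun n => (∑ i ∈ r n, β (n + 1 - i)) / ((r n).card : ℝ)) atTop (𝓝 0) := by
  classical
  rw [Metric.tendsto_atTop]
  intro ε hε
  obtain ⟨m₀, hm₀⟩ := (Metric.tendsto_atTop.mp hβ) (ε / 2) (half_pos hε)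
  obtain ⟨K, hK⟩ := exists_nat_gt (2 * (m₀ : ℝ) / ε)
  obtain ⟨N, hN⟩ := Filter.eventually_atTop.mp (hcard.eventually_ge_atTop (max K 1))
  refine ⟨max N m₀, fun n hn => ?_⟩
  have hnN : N ≤ n := le_trans (le_max_left _ _) hn
  have hnm₀ : m₀ ≤ n := le_trans (le_max_right _ _) hn
  have hc1 : 1 ≤ (r n).card := le_trans (le_max_right K 1) (hN n hnN)
  have hcK : K ≤ (r n).card := le_trans (le_max_left K 1) (hN n hnN)
  have hcpos : (0 : ℝ) < ((r n).card : ℝ) := by exact_mod_cast hc1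
  have hsum : (∑ i ∈ r n, β (n + 1 - i)) ≤ (ε / 2) * ((r n).card : ℝ) + m₀ := by
    have h1 : ∀ i ∈ r n, β (n + 1 - i) ≤ ε / 2 + (if n + 1 - i < m₀ then (1 : ℝ) else 0) := by
      intro i _
      by_cases h : n + 1 - i < m₀
      · simp only [h, if_true]
        linarith [hβ1 (n + 1 - i), le_of_lt (half_pos hε)]
      · simp only [h, if_false]
        push_neg at h
        have h2 := hm₀ _ h
        rw [Real.dist_eq, sub_zero] at h2
        have h3 := lt_of_abs_lt h2
        linarith
    have hfiltcard : (((r n).filter (fun i => n + 1 - i < m₀)).card : ℝ) ≤ (m₀ : ℝ) := by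
      have hfilter : ((r n).filter (fun i => n + 1 - i < m₀)) ⊆ Finset.Ioc (n - m₀) n := by
        intro i hi
        rw [Finset.mem_filter] at hi
        have hiIcc := Finset.mem_Icc.mp (hr n hi.1)
        rw [Finset.mem_Ioc]
        refine ⟨?_, hiIcc.2⟩
        have h4 := hi.2
        omega
      have h5 : ((r n).filter (fun i => n + 1 - i < m₀)).card ≤ m₀ :=
        le_trans (Finset.card_le_card hfilter) (by rw [Nat.card_Ioc]; omega)
      exact_mod_cast h5
    calc (∑ i ∈ r n, β (n + 1 - i))
        ≤ ∑ i ∈ r n, (ε / 2 + if n + 1 - i < m₀ then (1 : ℝ) else 0) :=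
          Finset.sum_le_sum h1
      _ = (ε / 2) * ((r n).card : ℝ)
            + (((r n).filter (fun i => n + 1 - i < m₀)).card : ℝ) := by
          rw [Finset.sum_add_distrib, Finset.sum_const, Finset.sum_boole, nsmul_eq_mul]
          ring
      _ ≤ (ε / 2) * ((r n).card : ℝ) + m₀ := by linarith
  rw [Real.dist_eq, sub_zero,
    abs_of_nonneg (div_nonneg (Finset.sum_nonneg fun i _ => hβ0 _) (le_of_lt hcpos))]
  rw [div_lt_iff₀ hcpos]
  have hKpos : (0 : ℝ) < K := lt_of_le_of_lt (div_nonneg (by positivity) (le_of_lt hε)) hK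
  have hm₀K : (m₀ : ℝ) < (ε / 2) * K := by
    rw [div_lt_iff₀ hε] at hK
    linarith
  have hmc : (m₀ : ℝ) < (ε / 2) * ((r n).card : ℝ) := by
    refine lt_of_lt_of_le hm₀K ?_
    have : (K : ℝ) ≤ ((r n).card : ℝ) := by exact_mod_cast hcK
    nlinarith
  linarith

lemma keyineq (hm : Model d s P X Y M Xi Yi Mi Mgen R) (n : ℕ) :
    ∫ ω, ((R n ω \ Lset M Mi R n ω).card : ℝ) / ((R n ω).card : ℝ) ∂P
      ≤ ∫ ω, (∑ i ∈ R n ω, betaFn P M Mgen (n + 1 - i)) / ((R n ω).card : ℝ) ∂P := by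
  classical
  haveI := hm.isProb
  set Pn := (Finset.Icc 1 n).powerset with hPn
  set Bad : ℕ → Set Ω := fun i => {ω | ¬ M ω ⊆ Mi i (n + 1 - i) ω} with hBad
  have hBadMeas : ∀ i, MeasurableSet (Bad i) := by
    intro i
    have h : Bad i = (fun ω => (M ω, Mi i (n + 1 - i) ω)) ⁻¹'
        {q : Finset (Fin d) × Finset (Fin d) | ¬ q.1 ⊆ q.2} := rfl
    rw [h]
    exact (hm.meas_M.prodMk (hm.meas_Mi i (n + 1 - i))) MeasurableSet.of_discrete
  set Er : Finset ℕ → Set Ω := fun r => R n ⁻¹' {r} with hEr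
  have hErMeas : ∀ r, MeasurableSet (Er r) := fun r => hm.meas_R n MeasurableSet.of_discrete
  set H : Ω → ℝ := fun ω => ∑ r ∈ Pn, ∑ i ∈ r,
    ((r.card : ℝ))⁻¹ * Set.indicator (Er r ∩ Bad i) (fun _ => (1 : ℝ)) ω with hH
  have hHint : Integrable H P :=
    integrable_finset_sum _ fun r _ => integrable_finset_sum _ fun i _ =>
      (((integrable_const (1 : ℝ)).indicator ((hErMeas r).inter (hBadMeas i))).const_mul _)
  have hFH : ∀ ω, ((R n ω \ Lset M Mi R n ω).card : ℝ) / ((R n ω).card : ℝ) ≤ H ω := by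
    intro ω
    have hterm_nonneg : ∀ r ∈ Pn, 0 ≤ ∑ i ∈ r,
        ((r.card : ℝ))⁻¹ * Set.indicator (Er r ∩ Bad i) (fun _ => (1 : ℝ)) ω := by
      intro r _
      refine Finset.sum_nonneg fun i _ => mul_nonneg (by positivity) ?_
      exact Set.indicator_nonneg (fun _ _ => zero_le_one) ω
    have hrPn : R n ω ∈ Pn := Finset.mem_powerset.mpr (hm.R_sub n ω)
    rcases Nat.eq_zero_or_pos (R n ω).card with h0 | hpos
    · have h1 : (R n ω \ Lset M Mi R n ω).card = 0 := by
        rw [Finset.card_eq_zero] at h0 ⊢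
        rw [h0]
        exact Finset.empty_sdiff _
      rw [h1]
      simpa using Finset.sum_nonneg hterm_nonneg
    · have hmemEr : ω ∈ Er (R n ω) := rfl
      have hcount : ((R n ω \ Lset M Mi R n ω).card : ℝ)
          ≤ ∑ i ∈ R n ω, Set.indicator (Er (R n ω) ∩ Bad i) (fun _ => (1 : ℝ)) ω := by
        have hsub : R n ω \ Lset M Mi R n ω ⊆ (R n ω).filter (fun i => ω ∈ Bad i) := by
          intro i hi
          rw [Finset.mem_sdiff] at hi
          obtain ⟨hir, hnot⟩ := hi
          rw [Finset.mem_filter]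
          refine ⟨hir, fun hsubm => hnot ?_⟩
          simp only [Lset, Finset.mem_filter]
          refine ⟨hir, n, ?_, le_refl n, ?_⟩
          · exact (Finset.mem_Icc.mp (hm.R_sub n ω hir)).2
          · exact hsubm
        calc ((R n ω \ Lset M Mi R n ω).card : ℝ)
            ≤ (((R n ω).filter (fun i => ω ∈ Bad i)).card : ℝ) := by
              exact_mod_cast Finset.card_le_card hsub
          _ = ∑ i ∈ R n ω, if ω ∈ Bad i then (1 : ℝ) else 0 := by
              rw [Finset.sum_boole]
          _ ≤ ∑ i ∈ R n ω, Set.indicator (Er (R n ω) ∩ Bad i) (fun _ => (1 : ℝ)) ω := by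
              refine Finset.sum_le_sum fun i _ => ?_
              by_cases hb : ω ∈ Bad i
              · rw [if_pos hb, Set.indicator_of_mem (Set.mem_inter hmemEr hb)]
              · rw [if_neg hb]
                exact Set.indicator_nonneg (fun _ _ => zero_le_one) ω
      have hterm : ((R n ω \ Lset M Mi R n ω).card : ℝ) / ((R n ω).card : ℝ)
          ≤ ∑ i ∈ R n ω,
              (((R n ω).card : ℝ))⁻¹ * Set.indicator (Er (R n ω) ∩ Bad i) (fun _ => (1 : ℝ)) ω := by
        rw [div_eq_inv_mul, ← Finset.mul_sum]
        exact mul_le_mul_of_nonneg_left hcount (by positivity)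
      refine le_trans hterm ?_
      exact Finset.single_le_sum hterm_nonneg hrPn
  have hstep : ∀ r ∈ Pn, ∀ i ∈ r,
      ∫ ω, ((r.card : ℝ))⁻¹ * Set.indicator (Er r ∩ Bad i) (fun _ => (1 : ℝ)) ω ∂P
        = ((r.card : ℝ))⁻¹ * ((P (Er r)).toReal * betaFn P M Mgen (n + 1 - i)) := by
    intro r hrPn i hir
    rw [integral_const_mul, integral_indicator_const (1 : ℝ) ((hErMeas r).inter (hBadMeas i)),
      smul_eq_mul, mul_one]
    have hiIcc := Finset.mem_Icc.mp (Finset.mem_powerset.mp hrPn hir)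
    have heq : n + 1 - i = (n - i) + 1 := by omega
    have hSi : MeasurableSet
        {p : Finset (Fin d) × (ℕ → ℕ → Finset (Fin d)) | ¬ p.1 ⊆ p.2 i (n - i)} := by
      have h : {p : Finset (Fin d) × (ℕ → ℕ → Finset (Fin d)) | ¬ p.1 ⊆ p.2 i (n - i)}
          = (fun p : Finset (Fin d) × (ℕ → ℕ → Finset (Fin d)) => (p.1, p.2 i (n - i))) ⁻¹'
              {q : Finset (Fin d) × Finset (Fin d) | ¬ q.1 ⊆ q.2} := rfl
      rw [h]
      refine Measurable.prodMk measurable_fst ?_ MeasurableSet.of_discrete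
      exact (measurable_pi_apply (n - i)).comp ((measurable_pi_apply i).comp measurable_snd)
    have hBadZ : Bad i = (fun ω => (M ω, fun i' m' => Mi i' (m' + 1) ω)) ⁻¹'
        {p : Finset (Fin d) × (ℕ → ℕ → Finset (Fin d)) | ¬ p.1 ⊆ p.2 i (n - i)} := by
      ext ω
      simp only [hBad, Set.mem_setOf_eq, Set.mem_preimage]
      rw [heq]
    have hprod : P (Er r ∩ Bad i) = P (Er r) * P (Bad i) := by
      rw [hEr, hBadZ]
      exact (hm.indep_R n).measure_inter_preimage_eq_mul {r} _
        MeasurableSet.of_discrete hSi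
    rw [measureReal_def, hprod, ENNReal.toReal_mul, stepC hm hiIcc.1 (by omega)]
  have hHeq : ∫ ω, H ω ∂P = ∑ r ∈ Pn, (P (Er r)).toReal *
      ((∑ i ∈ r, betaFn P M Mgen (n + 1 - i)) / (r.card : ℝ)) := by
    rw [hH, integral_finset_sum _ (fun r _ => integrable_finset_sum _ fun i _ =>
      (((integrable_const (1 : ℝ)).indicator ((hErMeas r).inter (hBadMeas i))).const_mul _))]
    refine Finset.sum_congr rfl fun r hrPn => ?_
    rw [integral_finset_sum _ (fun i _ =>
      (((integrable_const (1 : ℝ)).indicator ((hErMeas r).inter (hBadMeas i))).const_mul _))]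
    rw [Finset.sum_congr rfl (hstep r hrPn)]
    rw [← Finset.mul_sum, ← Finset.mul_sum]
    rw [div_eq_inv_mul]
    ring
  have hGeq : ∫ ω, (∑ i ∈ R n ω, betaFn P M Mgen (n + 1 - i)) / ((R n ω).card : ℝ) ∂P
      = ∑ r ∈ Pn, (P (Er r)).toReal *
          ((∑ i ∈ r, betaFn P M Mgen (n + 1 - i)) / (r.card : ℝ)) := by
    have hrep : ∀ ω, (∑ i ∈ R n ω, betaFn P M Mgen (n + 1 - i)) / ((R n ω).card : ℝ)
        = ∑ r ∈ Pn, Set.indicator (Er r)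
            (fun _ => (∑ i ∈ r, betaFn P M Mgen (n + 1 - i)) / (r.card : ℝ)) ω := by
      intro ω
      rw [Finset.sum_eq_single_of_mem (R n ω) (Finset.mem_powerset.mpr (hm.R_sub n ω))]
      · rw [Set.indicator_of_mem (show ω ∈ Er (R n ω) from rfl)]
      · intro r _ hne
        rw [Set.indicator_of_notMem]
        intro hmem
        exact hne (Set.mem_singleton_iff.mp hmem).symm
    simp_rw [hrep]
    rw [integral_finset_sum _ (fun r _ => (integrable_const _).indicator (hErMeas r))]
    refine Finset.sum_congr rfl fun r _ => ?_
    rw [integral_indicator_const _ (hErMeas r), smul_eq_mul, measureReal_def]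
  calc ∫ ω, ((R n ω \ Lset M Mi R n ω).card : ℝ) / ((R n ω).card : ℝ) ∂P
      ≤ ∫ ω, H ω ∂P :=
        integral_mono_of_nonneg
          (ae_of_all _ fun ω => div_nonneg (Nat.cast_nonneg _) (Nat.cast_nonneg _))
          hHint (ae_of_all _ hFH)
    _ = ∑ r ∈ Pn, (P (Er r)).toReal *
          ((∑ i ∈ r, betaFn P M Mgen (n + 1 - i)) / (r.card : ℝ)) := hHeq
    _ = ∫ ω, (∑ i ∈ R n ω, betaFn P M Mgen (n + 1 - i)) / ((R n ω).card : ℝ) ∂P := hGeq.symm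

end AuxLemmas

/-- **Lemma 6.2, last statement.** If `|𝓡_n| → ∞` a.s., then `E[|L_nᶜ|/|𝓡_n|] → 0`. -/
theorem statement7
    {d : ℕ} {s : ℝ} {Ω : Type} [MeasurableSpace Ω] {P : Measure Ω}
    {X : Ω → Vec d} {Y : Ω → ℝ} {M : Ω → Finset (Fin d)}
    {Xi : ℕ → Ω → Vec d} {Yi : ℕ → Ω → ℝ}
    {Mi : ℕ → ℕ → Ω → Finset (Fin d)} {Mgen : ℕ → Ω → Finset (Fin d)}
    {R : ℕ → Ω → Finset ℕ}
    (hmodel : Model d s P X Y M Xi Yi Mi Mgen R)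
    (hRinf : ∀ᵐ ω ∂P, Filter.Tendsto (fun n => (R n ω).card) Filter.atTop Filter.atTop) :
    Filter.Tendsto
      (fun n => ∫ ω, ((R n ω \ Lset M Mi R n ω).card : ℝ) / ((R n ω).card : ℝ) ∂P)
      Filter.atTop (nhds 0) := by
  classical
  haveI := hmodel.isProb
  have hβ0 : ∀ m, 0 ≤ betaFn P M Mgen m := fun m => betaFn_nonneg m
  have hβ1 : ∀ m, betaFn P M Mgen m ≤ 1 := fun m => betaFn_le_one hmodel m
  have hβlim : Tendsto (betaFn P M Mgen) atTop (𝓝 0) := betaFn_tendsto hmodel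
  have hG : Tendsto
      (fun n => ∫ ω, (∑ i ∈ R n ω, betaFn P M Mgen (n + 1 - i)) / ((R n ω).card : ℝ) ∂P)
      atTop (𝓝 0) := by
    have h0 : (0 : ℝ) = ∫ (_ : Ω), (0 : ℝ) ∂P := by simp
    rw [show (𝓝 (0 : ℝ)) = 𝓝 (∫ (_ : Ω), (0 : ℝ) ∂P) by rw [← h0]]
    apply tendsto_integral_of_dominated_convergence (bound := fun _ => 1)
    · intro n
      have h : (fun ω => (∑ i ∈ R n ω, betaFn P M Mgen (n + 1 - i)) / ((R n ω).card : ℝ))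
          = (fun r : Finset ℕ => (∑ i ∈ r, betaFn P M Mgen (n + 1 - i)) / (r.card : ℝ))
              ∘ (R n) := rfl
      rw [h]
      exact (Measurable.of_discrete.comp (hmodel.meas_R n)).aestronglyMeasurable
    · exact integrable_const 1
    · intro n
      filter_upwards with ω
      have hnn : 0 ≤ (∑ i ∈ R n ω, betaFn P M Mgen (n + 1 - i)) / ((R n ω).card : ℝ) :=
        div_nonneg (Finset.sum_nonneg fun i _ => hβ0 _) (Nat.cast_nonneg _)
      rw [Real.norm_eq_abs, abs_of_nonneg hnn]
      have hle : (∑ i ∈ R n ω, betaFn P M Mgen (n + 1 - i)) ≤ ((R n ω).card : ℝ) := by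
        calc (∑ i ∈ R n ω, betaFn P M Mgen (n + 1 - i))
            ≤ ∑ _i ∈ R n ω, (1 : ℝ) := Finset.sum_le_sum fun i _ => hβ1 _
          _ = ((R n ω).card : ℝ) := by simp
      exact div_le_one_of_le₀ hle (Nat.cast_nonneg _)
    · filter_upwards [hRinf] with ω hcard
      exact ptwise (betaFn P M Mgen) hβ0 hβ1 hβlim (fun n => R n ω)
        (fun n => hmodel.R_sub n ω) hcard
  refine tendsto_of_tendsto_of_tendsto_of_le_of_le tendsto_const_nhds hG
    (fun n => integral_nonneg fun ω => div_nonneg (Nat.cast_nonneg _) (Nat.cast_nonneg _))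
    (fun n => keyineq hmodel n)

end Collab
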